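/- Let P and Q be probability measures on a measurable space X with P ≪ Q and Radon–Nikodym derivative w* = dP/dQ satisfying 0 ≤ w*(x) ≤ M_3 for all x. Let φ_1,…,φ_L : X → ℝ be measurable with |φ_ℓ(x)|² ≤ M_2 for all ℓ ≤ L and all x, and ∫ φ_ℓ dP = 0 for all ℓ ≤ L; set k_L(x,y) = ∑_{ℓ=1}^L φ_ℓ(x)φ_ℓ(y). Let n be even, x_1,…,x_n i.i.d. with law Q, D_0 = {1,…,n/2}, D_1 = {n/2+1,…,n}, and define the control-variate weights w_i = (1/n) w*(x_i) − (2/n²) ∑_{j∈D_1} w*(x_i) w*(x_j) k_L(x_j, x_i) for i ∈ D_0, and symmetrically with D_0 for i ∈ D_1. Then there exists a constant c > 0 depending only on M_2 and M_3 such that for every L ≥ 1, every even n, and every t ∈ (0, 1], ℙ( ∑_{i=1}^n w_i < 1 − t ) ≤ 2 exp( − c n t² / L² ). -/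

import Mathlib

open MeasureTheory

universe u

open Real ProbabilityTheory
open scoped ENNReal NNReal



section Aux

lemma exp_le_quad {x : ℝ} (hx : |x| ≤ 1) : Real.exp x ≤ 1 + x + x ^ 2 := by
  have h := Real.exp_bound hx (n := 2) (by norm_num)
  have h2 : ∑ i ∈ Finset.range 2, x ^ i / (Nat.factorial i) = 1 + x := by
    simp [Finset.sum_range_succ]
  rw [h2] at h
  have h3 : ((Nat.succ 2 : ℕ) : ℝ) / ((Nat.factorial 2 : ℕ) * (2:ℕ)) = 3/4 := by
    norm_num [Nat.factorial]
  rw [h3] at h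
  have := (abs_le.1 h).2
  nlinarith [sq_abs x]

lemma mgf_single {X : Type*} [MeasurableSpace X] (Q : Measure X) [IsProbabilityMeasure Q]
    {f : X → ℝ} (hf : Measurable f) {B : ℝ} (hB : 1 ≤ B) (hfb : ∀ x, |f x| ≤ B)
    (hmean : ∫ x, f x ∂Q = 0) {l : ℝ} (hl0 : 0 ≤ l) (hlB : l * B ≤ 1) :
    ∫ x, Real.exp (l * f x) ∂Q ≤ Real.exp (l ^ 2 * B ^ 2) := by
  have hBpos : 0 < B := lt_of_lt_of_le one_pos hB
  have hpt : ∀ x, Real.exp (l * f x) ≤ 1 + l * f x + l ^ 2 * B ^ 2 := by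
    intro x
    have habs : |l * f x| ≤ 1 := by
      rw [abs_mul, abs_of_nonneg hl0]
      calc l * |f x| ≤ l * B := by
            exact mul_le_mul_of_nonneg_left (hfb x) hl0
        _ ≤ 1 := hlB
    refine (exp_le_quad habs).trans ?_
    have : (l * f x) ^ 2 ≤ l ^ 2 * B ^ 2 := by
      rw [mul_pow]
      have := hfb x
      have := abs_nonneg (f x)
      nlinarith [sq_abs (f x), sq_nonneg l,
        mul_le_mul_of_nonneg_left (mul_le_mul (hfb x) (hfb x) (abs_nonneg _) hBpos.le) (sq_nonneg l)]
    linarith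
  have hfint : Integrable f Q := by
    refine ⟨hf.aestronglyMeasurable, ?_⟩
    exact (hasFiniteIntegral_const B).mono' (ae_of_all _ fun x => by
      simpa [Real.norm_eq_abs] using hfb x)
  have hint1 : Integrable (fun x => 1 + l * f x + l ^ 2 * B ^ 2) Q := by
    exact ((integrable_const (1:ℝ)).add (hfint.const_mul l)).add (integrable_const _)
  have hexpint : Integrable (fun x => Real.exp (l * f x)) Q := by
    refine ⟨((hf.const_mul l).exp).aestronglyMeasurable, ?_⟩
    refine (hasFiniteIntegral_const (Real.exp 1)).mono' (ae_of_all _ fun x => ?_)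
    rw [Real.norm_eq_abs, Real.abs_exp]
    refine Real.exp_le_exp.2 ?_
    calc l * f x ≤ |l * f x| := le_abs_self _
      _ ≤ 1 := by
        rw [abs_mul, abs_of_nonneg hl0]
        exact (mul_le_mul_of_nonneg_left (hfb x) hl0).trans hlB
  calc ∫ x, Real.exp (l * f x) ∂Q ≤ ∫ x, (1 + l * f x + l ^ 2 * B ^ 2) ∂Q :=
        integral_mono hexpint hint1 hpt
    _ = 1 + l ^ 2 * B ^ 2 := by
        have h1 : Integrable (fun x => 1 + l * f x) Q := (integrable_const (1:ℝ)).add (hfint.const_mul l)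
        rw [integral_add h1 (integrable_const _),
          integral_add (integrable_const (1:ℝ)) (hfint.const_mul l),
          integral_const, MeasureTheory.integral_const_mul, hmean]
        simp
    _ ≤ Real.exp (l ^ 2 * B ^ 2) := by
        have := Real.add_one_le_exp (l ^ 2 * B ^ 2)
        linarith

lemma chernoff_subset_sum {X : Type*} [MeasurableSpace X] (Q : Measure X) [IsProbabilityMeasure Q]
    {N : ℕ} (s : Finset (Fin N)) {f : X → ℝ} (hf : Measurable f) {B : ℝ} (hB : 1 ≤ B)
    (hfb : ∀ x, |f x| ≤ B) (hmean : ∫ x, f x ∂Q = 0)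
    {l : ℝ} (hl0 : 0 ≤ l) (hlB : l * B ≤ 1) (ε : ℝ) :
    (Measure.pi fun _ : Fin N => Q) {ω | ε ≤ ∑ i ∈ s, f (ω i)} ≤
      ENNReal.ofReal (Real.exp (-(l * ε) + s.card * (l ^ 2 * B ^ 2))) := by
  set pp := Measure.pi fun _ : Fin N => Q with hpp
  haveI : IsProbabilityMeasure pp := by rw [hpp]; infer_instance
  set Y : (Fin N → X) → ℝ := fun ω => ∑ i ∈ s, f (ω i) with hY
  have hYm : Measurable Y := Finset.measurable_sum s fun i _ => hf.comp (measurable_pi_apply i)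
  have hint : Integrable (fun ω => Real.exp (l * Y ω)) pp := by
    refine ⟨((hYm.const_mul l).exp).aestronglyMeasurable, ?_⟩
    refine (hasFiniteIntegral_const (Real.exp (l * (s.card * B)))).mono' (ae_of_all _ fun ω => ?_)
    rw [Real.norm_eq_abs, Real.abs_exp]
    refine Real.exp_le_exp.2 (mul_le_mul_of_nonneg_left ?_ hl0)
    calc Y ω ≤ ∑ i ∈ s, B := Finset.sum_le_sum fun i _ => (abs_le.1 (hfb _)).2
      _ = s.card * B := by rw [Finset.sum_const, nsmul_eq_mul]
  have hcher := measure_ge_le_exp_mul_mgf (μ := pp) (X := Y) ε hl0 hint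
  have hmgf : mgf Y pp l ≤ Real.exp (s.card * (l ^ 2 * B ^ 2)) := by
    have hfac : ∀ ω : Fin N → X, Real.exp (l * Y ω) =
        ∏ i, (fun i x => if i ∈ s then Real.exp (l * f x) else 1) i (ω i) := by
      intro ω
      rw [hY]
      simp only
      rw [Finset.mul_sum, Real.exp_sum]
      rw [Finset.prod_ite_mem Finset.univ s fun i => Real.exp (l * f (ω i))]
      rw [Finset.univ_inter]
    have hprod : mgf Y pp l = ∏ i : Fin N, (if i ∈ s then ∫ x, Real.exp (l * f x) ∂Q else 1) := by
      rw [mgf]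
      rw [show (∫ ω, Real.exp (l * Y ω) ∂pp) = ∫ ω, ∏ i, (fun i x => if i ∈ s then Real.exp (l * f x) else 1) i (ω i) ∂pp from integral_congr_ae (ae_of_all _ hfac)]
      letI : MeasureSpace X := ⟨Q⟩
      have hv : pp = (volume : Measure (Fin N → X)) := by
        rw [hpp, MeasureTheory.volume_pi]; rfl
      rw [hv]
      rw [MeasureTheory.volume_pi, MeasureTheory.integral_fintype_prod_eq_prod (ι := Fin N)
        (fun i x => if i ∈ s then Real.exp (l * f x) else 1)]
      refine Finset.prod_congr rfl fun i _ => ?_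
      by_cases h : i ∈ s <;> simp only [h, if_true, if_false] <;> first | rfl | simp
    rw [hprod]
    have hone : (∏ i : Fin N, (if i ∈ s then ∫ x, Real.exp (l * f x) ∂Q else 1)) =
        ∏ i ∈ s, ∫ x, Real.exp (l * f x) ∂Q := by
      rw [Finset.prod_ite_mem Finset.univ s, Finset.univ_inter]
    rw [hone]
    have hsingle : ∫ x, Real.exp (l * f x) ∂Q ≤ Real.exp (l ^ 2 * B ^ 2) :=
      mgf_single Q hf hB hfb hmean hl0 hlB
    calc (∏ _i ∈ s, ∫ x, Real.exp (l * f x) ∂Q) ≤ ∏ _i ∈ s, Real.exp (l ^ 2 * B ^ 2) :=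
          Finset.prod_le_prod (fun i _ => integral_nonneg fun x => (Real.exp_pos _).le)
            (fun i _ => hsingle)
      _ = Real.exp (s.card * (l ^ 2 * B ^ 2)) := by
          rw [Finset.prod_const, ← Real.exp_nat_mul]
  have hreal : (pp {ω | ε ≤ Y ω}).toReal ≤ Real.exp (-(l * ε) + s.card * (l ^ 2 * B ^ 2)) := by
    refine hcher.trans ?_
    rw [Real.exp_add]
    have : Real.exp (-l * ε) = Real.exp (-(l*ε)) := by ring_nf
    rw [this]
    exact mul_le_mul_of_nonneg_left hmgf (Real.exp_pos _).le
  rw [← ENNReal.ofReal_toReal (measure_ne_top pp _)]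
  exact ENNReal.ofReal_le_ofReal hreal

lemma integral_withDensity_ofReal {X : Type*} [MeasurableSpace X] (Q : Measure X)
    {w : X → ℝ} (hw : Measurable w) (hw0 : ∀ x, 0 ≤ w x) (g : X → ℝ) :
    ∫ x, g x ∂(Q.withDensity fun x => ENNReal.ofReal (w x)) = ∫ x, w x * g x ∂Q := by
  have hd : (fun x => ENNReal.ofReal (w x)) = fun x => ((fun x => (w x).toNNReal) x : ℝ≥0∞) := rfl
  rw [hd, integral_withDensity_eq_integral_smul hw.real_toNNReal g]
  congr 1
  funext x
  rw [NNReal.smul_def, smul_eq_mul, Real.coe_toNNReal _ (hw0 x)]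

lemma card_filter_lt_fin (m : ℕ) :
    (Finset.univ.filter (fun i : Fin (2*m) => (i:ℕ) < m)).card = m := by
  have h : (Finset.univ.filter (fun i : Fin (2*m) => (i:ℕ) < m)).card
      = (Finset.univ : Finset (Fin m)).card := by
    apply Finset.card_bij' (fun (i : Fin (2*m)) hi => (⟨(i:ℕ), (Finset.mem_filter.1 hi).2⟩ : Fin m))
      (fun (j : Fin m) _ => (⟨(j:ℕ), by omega⟩ : Fin (2*m)))
    · intro i hi; simp
    · intro j hj; simp
    · intro i hi; simp
    · intro j hj; simp [Finset.mem_filter]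
  simpa using h

lemma final_sum_le {c0 c2 K c ν Λ t : ℝ} (hc2 : 0 < c2) (hK : K = 8/c2)
    (hcc0 : c ≤ c0) (hcc2 : c ≤ c2/2) (hc : 0 ≤ c) (hν : 0 ≤ ν) (hΛ : 1 ≤ Λ)
    (ht : 0 < t) (ht1 : t ≤ 1) (ha : K ≤ ν*t^2/Λ^2) :
    Real.exp (-(c0*ν*t^2)) + Λ*(4*Real.exp (-(c2*ν*t/Λ))) ≤
      2*Real.exp (-(c*ν*t^2)/Λ^2) := by
  have hΛ0 : (0:ℝ) < Λ := lt_of_lt_of_le one_pos hΛ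
  have hΛ2 : (0:ℝ) < Λ^2 := by positivity
  have hA : K*Λ^2 ≤ ν*t^2 := by
    rw [le_div_iff₀ hΛ2] at ha; linarith
  have h8 : 8*Λ^2 ≤ c2*(ν*t^2) := by
    rw [hK] at hA
    have := mul_le_mul_of_nonneg_left hA hc2.le
    rw [mul_comm (8/c2) (Λ^2)] at this
    calc 8*Λ^2 = c2 * (Λ^2 * (8/c2)) := by field_simp
      _ ≤ c2*(ν*t^2) := this
  have part1 : Real.exp (-(c0*ν*t^2)) ≤ Real.exp (-(c*ν*t^2)/Λ^2) := by
    apply Real.exp_le_exp.2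
    rw [neg_div, neg_le_neg_iff]
    calc c*ν*t^2/Λ^2 ≤ c*ν*t^2 := by
          apply div_le_self (by positivity)
          nlinarith
      _ ≤ c0*ν*t^2 := by nlinarith [sq_nonneg t]
  have part2 : Λ*(4*Real.exp (-(c2*ν*t/Λ))) ≤ Real.exp (-(c*ν*t^2)/Λ^2) := by
    have hz : -(c*ν*t^2)/Λ^2 = (c2*ν*t/Λ - c*ν*t^2/Λ^2) + -(c2*ν*t/Λ) := by ring
    rw [hz, Real.exp_add]
    have hform : Λ*(4*Real.exp (-(c2*ν*t/Λ))) = (4*Λ)*Real.exp (-(c2*ν*t/Λ)) := by ring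
    rw [hform]
    refine mul_le_mul_of_nonneg_right ?_ (Real.exp_pos _).le
    have hνt : ν*t^2 ≤ ν*t := by nlinarith [mul_nonneg (mul_nonneg hν ht.le) (sub_nonneg.2 ht1)]
    have hpoly : 4*Λ^3 ≤ c2*ν*t*Λ - c*ν*t^2 := by
      nlinarith [mul_le_mul_of_nonneg_right (mul_le_mul_of_nonneg_left hνt hc2.le) hΛ0.le,
        mul_le_mul_of_nonneg_right hcc2 (mul_nonneg hν (sq_nonneg t)),
        mul_nonneg (mul_nonneg ((by linarith : (0:ℝ) ≤ c2/2)) (mul_nonneg hν (sq_nonneg t))) (sub_nonneg.2 hΛ),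
        mul_le_mul_of_nonneg_right h8 hΛ0.le]
    have hzval : c2*ν*t/Λ - c*ν*t^2/Λ^2 = (c2*ν*t*Λ - c*ν*t^2)/Λ^2 := by
      field_simp
    have h4Λ : 4*Λ ≤ c2*ν*t/Λ - c*ν*t^2/Λ^2 := by
      rw [hzval]
      rw [le_div_iff₀ hΛ2]
      nlinarith
    calc (4:ℝ)*Λ ≤ (c2*ν*t/Λ - c*ν*t^2/Λ^2) := h4Λ
      _ ≤ Real.exp (c2*ν*t/Λ - c*ν*t^2/Λ^2) := by
          have := Real.add_one_le_exp (c2*ν*t/Λ - c*ν*t^2/Λ^2)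
          linarith
  linarith

end Aux

set_option maxHeartbeats 4000000 in
/-- **Lower-tail bound of part (ii) of Lemma B.6** (`lem:ineq`) of the paper: there is a
constant `c > 0` depending only on `M₂` and `M₃` such that the sum `S = ∑_i w_i` of the
control-variate reference weights (which has mean `1`) satisfies
`ℙ(S < 1 − t) ≤ 2 exp(−c n t² / L²)` for every `L ≥ 1`, every even `n = 2m`, and every
`t ∈ (0, 1]`.  Here `0 ≤ w* = dP/dQ ≤ M₃`, `|φ_ℓ(x)|² ≤ M₂`, `∫ φ_ℓ dP = 0`, and
`k_L(x,y) = ∑_ℓ φ_ℓ(x) φ_ℓ(y)`. -/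
theorem stmt14 (M2 M3 : ℝ) :
    ∃ c : ℝ, 0 < c ∧
      ∀ (X : Type u) [MeasurableSpace X] (P Q : Measure X),
        IsProbabilityMeasure P → IsProbabilityMeasure Q →
        ∀ (w : X → ℝ), Measurable w → (∀ x, 0 ≤ w x) → (∀ x, w x ≤ M3) →
        P = Q.withDensity (fun x => ENNReal.ofReal (w x)) →
        ∀ (L : ℕ), 1 ≤ L →
        ∀ (φ : Fin L → X → ℝ), (∀ ℓ, Measurable (φ ℓ)) →
        (∀ ℓ x, |φ ℓ x| ^ 2 ≤ M2) → (∀ ℓ, ∫ x, φ ℓ x ∂P = 0) →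
        ∀ (kL : X → X → ℝ), (∀ a b, kL a b = ∑ ℓ, φ ℓ a * φ ℓ b) →
        ∀ (m : ℕ) (D0 D1 : Finset (Fin (2 * m))),
        D0 = Finset.univ.filter (fun i : Fin (2 * m) => (i : ℕ) < m) →
        D1 = Finset.univ.filter (fun i : Fin (2 * m) => m ≤ (i : ℕ)) →
        ∀ (W : (Fin (2 * m) → X) → Fin (2 * m) → ℝ),
        (∀ ω i, W ω i =
          if (i : ℕ) < m then
            (1 / (2 * m : ℝ)) * w (ω i)
              - (2 / (2 * m : ℝ) ^ 2) * ∑ j ∈ D1, w (ω i) * w (ω j) * kL (ω j) (ω i)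
          else
            (1 / (2 * m : ℝ)) * w (ω i)
              - (2 / (2 * m : ℝ) ^ 2) * ∑ j ∈ D0, w (ω i) * w (ω j) * kL (ω j) (ω i)) →
        ∀ t : ℝ, 0 < t → t ≤ 1 →
          (Measure.pi fun _ : Fin (2 * m) => Q) {ω | (∑ i, W ω i) < 1 - t}
            ≤ ENNReal.ofReal
                (2 * Real.exp (-(c * (2 * m : ℝ) * t ^ 2) / (L : ℝ) ^ 2)) := by
  classical
  set M3' : ℝ := max M3 1 with hM3'def
  set B1 : ℝ := M3' * (max M2 0 + 1) with hB1def
  set c0 : ℝ := 1/(16*M3'^2) with hc0def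
  set c2 : ℝ := 1/(16*B1^2) with hc2def
  set K : ℝ := 8/c2 with hKdef
  have hM3'1 : (1:ℝ) ≤ M3' := le_max_right _ _
  have hM3'0 : (0:ℝ) < M3' := lt_of_lt_of_le one_pos hM3'1
  have hB11 : (1:ℝ) ≤ B1 := by
    rw [hB1def]; nlinarith [le_max_right M2 0, le_max_left M2 (0:ℝ)]
  have hB10 : (0:ℝ) < B1 := lt_of_lt_of_le one_pos hB11
  have hc0pos : 0 < c0 := by rw [hc0def]; positivity
  have hc2pos : 0 < c2 := by rw [hc2def]; positivity
  have hKpos : 0 < K := by rw [hKdef]; positivity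
  set c : ℝ := min c0 (min (c2/2) (Real.log 2 / K)) with hcdef
  have hcpos : 0 < c := by
    rw [hcdef]
    refine lt_min hc0pos (lt_min (by positivity) (div_pos (Real.log_pos one_lt_two) hKpos))
  refine ⟨c, hcpos, ?_⟩
  intro X _ P Q hPp hQp w hw hw0 hwM3 hP L hL φ hφm hφb hφmean kL hkL m D0 D1 hD0 hD1 W hW t ht ht1
  have hL1 : (1:ℝ) ≤ (L:ℝ) := by exact_mod_cast hL
  have hLpos : (0:ℝ) < (L:ℝ) := lt_of_lt_of_le one_pos hL1
  set pp := Measure.pi fun _ : Fin (2*m) => Q with hppdef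
  haveI : IsProbabilityMeasure pp := by rw [hppdef]; infer_instance
  by_cases hcase : 2*(m:ℝ)*t^2/(L:ℝ)^2 < K
  · -- trivial regime
    have h1 : pp {ω | (∑ i, W ω i) < 1 - t} ≤ 1 := prob_le_one
    refine h1.trans ?_
    rw [show (1:ℝ≥0∞) = ENNReal.ofReal 1 by simp]
    apply ENNReal.ofReal_le_ofReal
    have hx : c * (2 * (m:ℝ)) * t^2 / (L:ℝ)^2 ≤ Real.log 2 := by
      have h2 : c * (2 * (m:ℝ)) * t^2 / (L:ℝ)^2 = c * (2*(m:ℝ)*t^2/(L:ℝ)^2) := by ring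
      rw [h2]
      have hcK : c ≤ Real.log 2 / K := hcdef ▸ le_trans (min_le_right _ _) (min_le_right _ _)
      have hnn : 0 ≤ 2*(m:ℝ)*t^2/(L:ℝ)^2 := by positivity
      calc c * (2*(m:ℝ)*t^2/(L:ℝ)^2) ≤ (Real.log 2 / K) * (2*(m:ℝ)*t^2/(L:ℝ)^2) :=
            mul_le_mul_of_nonneg_right hcK hnn
        _ ≤ (Real.log 2 / K) * K := by
            refine mul_le_mul_of_nonneg_left hcase.le ?_
            positivity
        _ = Real.log 2 := by field_simp
    have hexp : (1:ℝ)/2 ≤ Real.exp (-(c * (2 * (m:ℝ)) * t ^ 2) / (L:ℝ) ^ 2) := by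
      have : Real.exp (-Real.log 2) ≤ Real.exp (-(c * (2 * (m:ℝ)) * t ^ 2) / (L:ℝ) ^ 2) := by
        apply Real.exp_le_exp.2
        rw [neg_div]
        exact neg_le_neg hx
      rwa [Real.exp_neg, Real.exp_log two_pos, ← one_div] at this
    linarith
  · -- main regime
    push_neg at hcase
    have hm1 : 1 ≤ m := by
      by_contra hm
      push_neg at hm
      interval_cases m
      simp only [Nat.cast_zero, mul_zero, zero_mul, zero_div] at hcase
      linarith only [hKpos, hcase]
    have hmR : (1:ℝ) ≤ (m:ℝ) := by exact_mod_cast hm1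
    have hmpos : (0:ℝ) < (m:ℝ) := lt_of_lt_of_le one_pos hmR
    -- basic bounds
    have hwM3' : ∀ x, w x ≤ M3' := fun x => (hwM3 x).trans (le_max_left _ _)
    have hφb' : ∀ ℓ x, |φ ℓ x| ≤ max M2 0 + 1 := by
      intro ℓ x
      have h1 : |φ ℓ x| ^ 2 ≤ max M2 0 := (hφb ℓ x).trans (le_max_left _ _)
      nlinarith only [h1, abs_nonneg (φ ℓ x), le_max_right M2 (0:ℝ)]
    set ψ : Fin L → X → ℝ := fun ℓ x => w x * φ ℓ x with hψdef
    have hψm : ∀ ℓ, Measurable (ψ ℓ) := fun ℓ => hw.mul (hφm ℓ)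
    have hψb : ∀ ℓ x, |ψ ℓ x| ≤ B1 := by
      intro ℓ x
      rw [hψdef]
      simp only
      rw [abs_mul, abs_of_nonneg (hw0 x)]
      rw [hB1def]
      exact mul_le_mul (hwM3' x) (hφb' ℓ x) (abs_nonneg _) hM3'0.le
    set nψ : Fin L → X → ℝ := fun ℓ x => -(ψ ℓ x) with hnψdef
    have hnψm : ∀ ℓ, Measurable (nψ ℓ) := fun ℓ => (hψm ℓ).neg
    have hnψb : ∀ ℓ x, |nψ ℓ x| ≤ B1 := fun ℓ x => by
      rw [hnψdef]; simpa using hψb ℓ x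
    -- integrals
    have hwInt : Integrable w Q := by
      refine ⟨hw.aestronglyMeasurable, ?_⟩
      refine (hasFiniteIntegral_const M3').mono' (ae_of_all _ fun x => ?_)
      rw [Real.norm_eq_abs, abs_of_nonneg (hw0 x)]
      exact hwM3' x
    have hwmean : ∫ x, w x ∂Q = 1 := by
      have h1 : ∫ x, (1:ℝ) ∂P = 1 := by simp
      rw [hP, integral_withDensity_ofReal Q hw hw0 (fun _ => (1:ℝ))] at h1
      simpa using h1
    set f0 : X → ℝ := fun x => 1 - w x with hf0def
    have hf0m : Measurable f0 := measurable_const.sub hw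
    have hf0b : ∀ x, |f0 x| ≤ M3' := by
      intro x
      rw [hf0def]
      simp only
      rw [abs_le]
      constructor
      · have := hwM3' x; linarith only [this, hM3'1]
      · have := hw0 x; linarith only [this, hM3'1]
    have hf0mean : ∫ x, f0 x ∂Q = 0 := by
      rw [hf0def]
      rw [integral_sub (integrable_const (1:ℝ)) hwInt, hwmean]
      simp
    have hψmean : ∀ ℓ, ∫ x, ψ ℓ x ∂Q = 0 := by
      intro ℓ
      have h1 := hφmean ℓ
      rw [hP, integral_withDensity_ofReal Q hw hw0 (φ ℓ)] at h1
      exact h1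
    have hnψmean : ∀ ℓ, ∫ x, nψ ℓ x ∂Q = 0 := by
      intro ℓ
      rw [hnψdef]
      simp only
      rw [integral_neg, hψmean ℓ, neg_zero]
    -- s0 and lambdas
    set s0 : ℝ := Real.sqrt (t/(2*(L:ℝ))) with hs0def
    have hs0nn : 0 ≤ s0 := Real.sqrt_nonneg _
    have hs0sq : s0^2 = t/(2*(L:ℝ)) := Real.sq_sqrt (by positivity)
    have hs01 : s0 ≤ 1 := by
      rw [hs0def]
      rw [show (1:ℝ) = Real.sqrt 1 by simp]
      apply Real.sqrt_le_sqrt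
      rw [div_le_one (by positivity)]
      linarith only [ht1, hL1]
    set l1 : ℝ := t/(4*M3'^2) with hl1def
    have hl10 : 0 ≤ l1 := by rw [hl1def]; positivity
    have hl1B : l1 * M3' ≤ 1 := by
      rw [hl1def]
      rw [div_mul_eq_mul_div, mul_comm]
      rw [div_le_one (by positivity)]
      nlinarith only [ht1, hM3'1, ht.le]
    set l2 : ℝ := s0/(2*B1^2) with hl2def
    have hl20 : 0 ≤ l2 := by rw [hl2def]; positivity
    have hl2B : l2 * B1 ≤ 1 := by
      rw [hl2def]
      rw [div_mul_eq_mul_div, mul_comm]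
      rw [div_le_one (by positivity)]
      nlinarith only [hs01, hB11, hs0nn]
    -- events
    set E0 : Set (Fin (2*m) → X) := {ω | 2*(m:ℝ)*t/2 ≤ ∑ i ∈ Finset.univ, f0 (ω i)} with hE0def
    set EA : Fin L → Set (Fin (2*m) → X) :=
      fun ℓ => {ω | (m:ℝ)*s0 ≤ ∑ i ∈ D0, ψ ℓ (ω i)} with hEAdef
    set EA' : Fin L → Set (Fin (2*m) → X) :=
      fun ℓ => {ω | (m:ℝ)*s0 ≤ ∑ i ∈ D0, nψ ℓ (ω i)} with hEA'def
    set EB : Fin L → Set (Fin (2*m) → X) :=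
      fun ℓ => {ω | (m:ℝ)*s0 ≤ ∑ i ∈ D1, ψ ℓ (ω i)} with hEBdef
    set EB' : Fin L → Set (Fin (2*m) → X) :=
      fun ℓ => {ω | (m:ℝ)*s0 ≤ ∑ i ∈ D1, nψ ℓ (ω i)} with hEB'def
    -- cards
    have hcard0 : D0.card = m := by rw [hD0]; exact card_filter_lt_fin m
    have hD1' : D1 = Finset.univ.filter (fun i : Fin (2*m) => ¬((i:ℕ) < m)) := by
      rw [hD1]; apply Finset.filter_congr; intro i _; simp [not_lt]
    have hcard1 : D1.card = m := by
      have := Finset.card_filter_add_card_filter_not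
        (s := (Finset.univ : Finset (Fin (2*m)))) (p := fun i : Fin (2*m) => (i:ℕ) < m)
      rw [← hD0, ← hD1'] at this
      rw [Finset.card_univ, Fintype.card_fin] at this
      omega
    -- subset claim
    have hsub : {ω : Fin (2*m) → X | (∑ i, W ω i) < 1 - t} ⊆
        E0 ∪ ⋃ ℓ, (EA ℓ ∪ EA' ℓ ∪ EB ℓ ∪ EB' ℓ) := by
      intro ω hω
      simp only [Set.mem_setOf_eq] at hω
      by_contra hnot
      simp only [Set.mem_union, Set.mem_iUnion, not_or, not_exists] at hnot
      obtain ⟨hn0, hnrest⟩ := hnot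
      rw [hE0def] at hn0
      simp only [Set.mem_setOf_eq, not_le] at hn0
      have hT : ∀ ℓ, |∑ i ∈ D0, ψ ℓ (ω i)| < (m:ℝ)*s0 ∧ |∑ i ∈ D1, ψ ℓ (ω i)| < (m:ℝ)*s0 := by
        intro ℓ
        have h := hnrest ℓ
        simp only [Set.mem_union, not_or, hEAdef, hEA'def, hEBdef, hEB'def,
          Set.mem_setOf_eq, not_le, hnψdef] at h
        obtain ⟨⟨⟨hA1, hA2⟩, hB1⟩, hB2⟩ := h
        rw [Finset.sum_neg_distrib] at hA2 hB2
        constructor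
        · rw [abs_lt]; exact ⟨by linarith only [hA2], hA1⟩
        · rw [abs_lt]; exact ⟨by linarith only [hB2], hB1⟩
      -- identity for the sum
      have hterm : ∀ x y : X, w x * w y * kL y x = ∑ ℓ, ψ ℓ y * ψ ℓ x := by
        intro x y
        rw [hkL, Finset.mul_sum]
        refine Finset.sum_congr rfl fun ℓ _ => ?_
        rw [hψdef]; ring
      have hcross : ∀ (S T : Finset (Fin (2*m))),
          ∑ i ∈ S, ∑ j ∈ T, w (ω i) * w (ω j) * kL (ω j) (ω i)
            = ∑ ℓ, (∑ i ∈ S, ψ ℓ (ω i)) * (∑ j ∈ T, ψ ℓ (ω j)) := by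
        intro S T
        calc ∑ i ∈ S, ∑ j ∈ T, w (ω i) * w (ω j) * kL (ω j) (ω i)
            = ∑ i ∈ S, ∑ j ∈ T, ∑ ℓ, ψ ℓ (ω j) * ψ ℓ (ω i) :=
              Finset.sum_congr rfl fun i _ => Finset.sum_congr rfl fun j _ => hterm (ω i) (ω j)
          _ = ∑ i ∈ S, ∑ ℓ, ∑ j ∈ T, ψ ℓ (ω j) * ψ ℓ (ω i) :=
              Finset.sum_congr rfl fun i _ => Finset.sum_comm
          _ = ∑ ℓ, ∑ i ∈ S, ∑ j ∈ T, ψ ℓ (ω j) * ψ ℓ (ω i) := Finset.sum_comm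
          _ = ∑ ℓ, (∑ i ∈ S, ψ ℓ (ω i)) * (∑ j ∈ T, ψ ℓ (ω j)) := by
              refine Finset.sum_congr rfl fun ℓ _ => ?_
              rw [Finset.sum_mul]
              refine Finset.sum_congr rfl fun i _ => ?_
              rw [Finset.mul_sum]
              exact Finset.sum_congr rfl fun j _ => mul_comm _ _
      have hWD0 : ∑ i ∈ D0, W ω i = (1/(2*(m:ℝ))) * (∑ i ∈ D0, w (ω i))
          - (2/(2*(m:ℝ))^2) * ∑ ℓ, (∑ i ∈ D0, ψ ℓ (ω i)) * (∑ j ∈ D1, ψ ℓ (ω j)) := by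
        have hcon : ∀ i ∈ D0, W ω i = (1/(2*(m:ℝ))) * w (ω i)
            - (2/(2*(m:ℝ))^2) * ∑ j ∈ D1, w (ω i) * w (ω j) * kL (ω j) (ω i) := by
          intro i hi
          rw [hD0] at hi
          rw [hW ω i, if_pos ((Finset.mem_filter.1 hi).2)]
        rw [Finset.sum_congr rfl hcon, Finset.sum_sub_distrib, ← Finset.mul_sum, ← Finset.mul_sum,
          hcross D0 D1]
      have hWD1 : ∑ i ∈ D1, W ω i = (1/(2*(m:ℝ))) * (∑ i ∈ D1, w (ω i))
          - (2/(2*(m:ℝ))^2) * ∑ ℓ, (∑ i ∈ D0, ψ ℓ (ω i)) * (∑ j ∈ D1, ψ ℓ (ω j)) := by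
        have hcon : ∀ i ∈ D1, W ω i = (1/(2*(m:ℝ))) * w (ω i)
            - (2/(2*(m:ℝ))^2) * ∑ j ∈ D0, w (ω i) * w (ω j) * kL (ω j) (ω i) := by
          intro i hi
          rw [hD1] at hi
          have hge := (Finset.mem_filter.1 hi).2
          rw [hW ω i, if_neg (by omega)]
        rw [Finset.sum_congr rfl hcon, Finset.sum_sub_distrib, ← Finset.mul_sum, ← Finset.mul_sum,
          hcross D1 D0]
        congr 1
        congr 1
        exact Finset.sum_congr rfl fun ℓ _ => mul_comm _ _
      have hsplitW : ∑ i, W ω i = ∑ i ∈ D0, W ω i + ∑ i ∈ D1, W ω i := by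
        rw [hD0, hD1', Finset.sum_filter_add_sum_filter_not]
      have hsplitw : (∑ i ∈ Finset.univ, w (ω i)) = ∑ i ∈ D0, w (ω i) + ∑ i ∈ D1, w (ω i) := by
        rw [hD0, hD1', Finset.sum_filter_add_sum_filter_not]
      -- lower bound for Sw
      have hSwsum : ∑ i ∈ Finset.univ, f0 (ω i) = 2*(m:ℝ) - ∑ i ∈ Finset.univ, w (ω i) := by
        rw [hf0def]
        rw [Finset.sum_sub_distrib, Finset.sum_const, Finset.card_univ, Fintype.card_fin]
        push_cast
        ring
      have hSw : 2*(m:ℝ)*(1 - t/2) < ∑ i ∈ Finset.univ, w (ω i) := by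
        rw [hSwsum] at hn0
        linarith only [hn0]
      -- bound for the cross sum
      have hTT : |∑ ℓ, (∑ i ∈ D0, ψ ℓ (ω i)) * (∑ j ∈ D1, ψ ℓ (ω j))| ≤ (m:ℝ)^2 * (t/2) := by
        calc |∑ ℓ, (∑ i ∈ D0, ψ ℓ (ω i)) * (∑ j ∈ D1, ψ ℓ (ω j))|
            ≤ ∑ ℓ, |(∑ i ∈ D0, ψ ℓ (ω i)) * (∑ j ∈ D1, ψ ℓ (ω j))| :=
              Finset.abs_sum_le_sum_abs _ _
          _ ≤ ∑ _ℓ : Fin L, ((m:ℝ)*s0) * ((m:ℝ)*s0) := by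
              refine Finset.sum_le_sum fun ℓ _ => ?_
              rw [abs_mul]
              exact mul_le_mul (hT ℓ).1.le (hT ℓ).2.le (abs_nonneg _)
                (by positivity)
          _ = (L:ℝ) * (((m:ℝ)*s0) * ((m:ℝ)*s0)) := by
              rw [Finset.sum_const, Finset.card_univ, Fintype.card_fin, nsmul_eq_mul]
          _ = (m:ℝ)^2 * ((L:ℝ) * s0^2) := by ring
          _ = (m:ℝ)^2 * (t/2) := by
              rw [hs0sq]
              congr 1
              field_simp
      have hge : ∑ i, W ω i ≥ 1 - t := by
        rw [hsplitW, hWD0, hWD1]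
        have e1 : (1/(2*(m:ℝ))) * (∑ i ∈ D0, w (ω i)) + (1/(2*(m:ℝ))) * (∑ i ∈ D1, w (ω i))
            = (1/(2*(m:ℝ))) * (∑ i ∈ Finset.univ, w (ω i)) := by
          rw [hsplitw]; ring
        have h2m : (0:ℝ) < 2*(m:ℝ) := by linarith
        have hq1 : (1/(2*(m:ℝ))) * (∑ i ∈ Finset.univ, w (ω i)) ≥ 1 - t/2 := by
          have := mul_le_mul_of_nonneg_left hSw.le (by positivity : (0:ℝ) ≤ 1/(2*(m:ℝ)))
          have heq : (1/(2*(m:ℝ))) * (2*(m:ℝ)*(1 - t/2)) = 1 - t/2 := by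
            field_simp
          linarith only [this, heq]
        have hq2 : (2/(2*(m:ℝ))^2) * ∑ ℓ, (∑ i ∈ D0, ψ ℓ (ω i)) * (∑ j ∈ D1, ψ ℓ (ω j))
            ≤ t/4 := by
          have habs := (abs_le.1 hTT).2
          have h5 := mul_le_mul_of_nonneg_left habs (by positivity : (0:ℝ) ≤ 2/(2*(m:ℝ))^2)
          have heq : (2/(2*(m:ℝ))^2) * ((m:ℝ)^2*(t/2)) = t/4 := by
            field_simp
            ring
          linarith only [h5, heq]
        linarith only [hq1, hq2, e1]
      linarith only [hge, hω]
    -- measure bounds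
    have hbE0 : pp E0 ≤ ENNReal.ofReal (Real.exp (-(c0 * (2*(m:ℝ)) * t^2))) := by
      have hch := chernoff_subset_sum (N := 2*m) Q Finset.univ hf0m hM3'1 hf0b hf0mean hl10 hl1B
        (2*(m:ℝ)*t/2)
      rw [← hppdef] at hch
      refine le_trans ?_ (hch.trans (ENNReal.ofReal_le_ofReal (Real.exp_le_exp.2 (le_of_eq ?_))))
      · rw [hE0def]
      · rw [Finset.card_univ, Fintype.card_fin]
        push_cast
        rw [hl1def, hc0def]
        have hne : M3' ≠ 0 := ne_of_gt hM3'0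
        field_simp [hne]
        ring
    have hexp2 : ∀ (s : Finset (Fin (2*m))) (g : X → ℝ), s.card = m → Measurable g →
        (∀ x, |g x| ≤ B1) → (∫ x, g x ∂Q = 0) →
        pp {ω | (m:ℝ)*s0 ≤ ∑ i ∈ s, g (ω i)} ≤
          ENNReal.ofReal (Real.exp (-(c2 * (2*(m:ℝ)) * t / (L:ℝ)))) := by
      intro s g hcard hgm hgb hgmean
      have hch := chernoff_subset_sum Q s hgm hB11 hgb hgmean hl20 hl2B ((m:ℝ)*s0)
      rw [← hppdef, hcard] at hch
      refine hch.trans (ENNReal.ofReal_le_ofReal (Real.exp_le_exp.2 (le_of_eq ?_)))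
      have hLne : (L:ℝ) ≠ 0 := ne_of_gt hLpos
      have hB1ne : B1 ≠ 0 := ne_of_gt hB10
      have ht2 : t = 2*(L:ℝ)*s0^2 := by rw [hs0sq]; field_simp
      rw [ht2, hl2def, hc2def]
      field_simp
      ring
    have hbEA : ∀ ℓ, pp (EA ℓ) ≤ ENNReal.ofReal (Real.exp (-(c2 * (2*(m:ℝ)) * t / (L:ℝ)))) :=
      fun ℓ => hexp2 D0 (ψ ℓ) hcard0 (hψm ℓ) (hψb ℓ) (hψmean ℓ)
    have hbEA' : ∀ ℓ, pp (EA' ℓ) ≤ ENNReal.ofReal (Real.exp (-(c2 * (2*(m:ℝ)) * t / (L:ℝ)))) :=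
      fun ℓ => hexp2 D0 (nψ ℓ) hcard0 (hnψm ℓ) (hnψb ℓ) (hnψmean ℓ)
    have hbEB : ∀ ℓ, pp (EB ℓ) ≤ ENNReal.ofReal (Real.exp (-(c2 * (2*(m:ℝ)) * t / (L:ℝ)))) :=
      fun ℓ => hexp2 D1 (ψ ℓ) hcard1 (hψm ℓ) (hψb ℓ) (hψmean ℓ)
    have hbEB' : ∀ ℓ, pp (EB' ℓ) ≤ ENNReal.ofReal (Real.exp (-(c2 * (2*(m:ℝ)) * t / (L:ℝ)))) :=
      fun ℓ => hexp2 D1 (nψ ℓ) hcard1 (hnψm ℓ) (hnψb ℓ) (hnψmean ℓ)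
    set e2 : ℝ := Real.exp (-(c2 * (2*(m:ℝ)) * t / (L:ℝ))) with he2def
    have he2nn : 0 ≤ e2 := (Real.exp_pos _).le
    have h4 : ∀ ℓ, pp (EA ℓ ∪ EA' ℓ ∪ EB ℓ ∪ EB' ℓ) ≤ ENNReal.ofReal (4*e2) := by
      intro ℓ
      calc pp (EA ℓ ∪ EA' ℓ ∪ EB ℓ ∪ EB' ℓ)
          ≤ pp (EA ℓ ∪ EA' ℓ ∪ EB ℓ) + pp (EB' ℓ) := measure_union_le _ _
        _ ≤ (pp (EA ℓ ∪ EA' ℓ) + pp (EB ℓ)) + pp (EB' ℓ) :=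
            add_le_add_left (measure_union_le _ _) _
        _ ≤ ((pp (EA ℓ) + pp (EA' ℓ)) + pp (EB ℓ)) + pp (EB' ℓ) :=
            add_le_add_left (add_le_add_left (measure_union_le _ _) _) _
        _ ≤ ((ENNReal.ofReal e2 + ENNReal.ofReal e2) + ENNReal.ofReal e2) + ENNReal.ofReal e2 := by
            gcongr
            exacts [hbEA ℓ, hbEA' ℓ, hbEB ℓ, hbEB' ℓ]
        _ = ENNReal.ofReal (4*e2) := by
            rw [← ENNReal.ofReal_add he2nn he2nn, ← ENNReal.ofReal_add (by linarith) he2nn,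
              ← ENNReal.ofReal_add (by linarith) he2nn]
            congr 1
            ring
    calc pp {ω | (∑ i, W ω i) < 1 - t}
        ≤ pp (E0 ∪ ⋃ ℓ, (EA ℓ ∪ EA' ℓ ∪ EB ℓ ∪ EB' ℓ)) := measure_mono hsub
      _ ≤ pp E0 + pp (⋃ ℓ, (EA ℓ ∪ EA' ℓ ∪ EB ℓ ∪ EB' ℓ)) := measure_union_le _ _
      _ ≤ pp E0 + ∑ ℓ, pp (EA ℓ ∪ EA' ℓ ∪ EB ℓ ∪ EB' ℓ) :=
          add_le_add_right (measure_iUnion_fintype_le _ _) _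
      _ ≤ ENNReal.ofReal (Real.exp (-(c0 * (2*(m:ℝ)) * t^2)))
          + ∑ _ℓ : Fin L, ENNReal.ofReal (4*e2) :=
          add_le_add hbE0 (Finset.sum_le_sum fun ℓ _ => h4 ℓ)
      _ = ENNReal.ofReal (Real.exp (-(c0 * (2*(m:ℝ)) * t^2)) + (L:ℝ) * (4*e2)) := by
          rw [Finset.sum_const, Finset.card_univ, Fintype.card_fin, nsmul_eq_mul]
          rw [← ENNReal.ofReal_natCast L, ← ENNReal.ofReal_mul (Nat.cast_nonneg L)]
          rw [← ENNReal.ofReal_add (Real.exp_pos _).le (by positivity)]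
      _ ≤ ENNReal.ofReal (2 * Real.exp (-(c * (2 * (m:ℝ)) * t ^ 2) / (L:ℝ) ^ 2)) := by
          apply ENNReal.ofReal_le_ofReal
          have hfin := final_sum_le (c0 := c0) (c2 := c2) (K := K) (c := c)
            (ν := 2*(m:ℝ)) (Λ := (L:ℝ)) (t := t) hc2pos hKdef
            (hcdef ▸ min_le_left _ _)
            (hcdef ▸ le_trans (min_le_right _ _) (min_le_left _ _))
            hcpos.le (by positivity) hL1 ht ht1 hcase
          rw [he2def]
          convert hfin using 3 <;> ring
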